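/- Fix a probability measure π on Ω = C([0,1],ℝⁿ) and θ > 0, and let V(x,t) = −2θ ∫_{ℝⁿ} e^{−|x−z|²} dπ_t(z) with π_t = (e_t)_♯π. Then any critical point γ₀ of the functional c₀(γ) = ∫₀¹ ½|γ'(t)|² dt + 2θ∫₀¹∫_{ℝⁿ} e^{−|γ(t)−z|²} dπ_t(z) dt satisfies |γ₀''(t)| ≤ 4θ for all t; consequently γ₀(t) = γ_euc(t) + θE(θ,t) where γ_euc(t) = γ₀(0) + t(γ₀(1) − γ₀(0)) and sup_{t∈[0,1]} |E(θ,t)| ≤ 4√n. -/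

import Mathlib

open MeasureTheory Set

-- auxiliary: r * exp(-r²) ≤ 1
lemma aux_exp_bound (r : ℝ) (hr : 0 ≤ r) : Real.exp (-r ^ 2) * r ≤ 1 := by
  have h1 : r ^ 2 + 1 ≤ Real.exp (r ^ 2) := Real.add_one_le_exp _
  have h2 : Real.exp (-r ^ 2) = (Real.exp (r ^ 2))⁻¹ := by
    rw [Real.exp_neg]
  have h3 : (0:ℝ) < Real.exp (r ^ 2) := Real.exp_pos _
  rw [h2]
  rw [inv_mul_le_iff₀ h3]
  nlinarith

theorem critical_path_close_to_straight_line (n : ℕ)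
    [mΩ : MeasurableSpace C(Set.Icc (0:ℝ) 1, EuclideanSpace ℝ (Fin n))]
    [BorelSpace C(Set.Icc (0:ℝ) 1, EuclideanSpace ℝ (Fin n))]
    (π : Measure C(Set.Icc (0:ℝ) 1, EuclideanSpace ℝ (Fin n))) [IsProbabilityMeasure π]
    (θ : ℝ) (hθ : 0 < θ)
    (γ₀ : ℝ → EuclideanSpace ℝ (Fin n)) (hγ : ContDiff ℝ 2 γ₀)
    -- Euler–Lagrange equation for critical points of the interacting functional
    (hEL : ∀ t ∈ Set.Icc (0:ℝ) 1,
      deriv (deriv γ₀) t =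
        (-(4 * θ)) • ∫ z, Real.exp (-‖γ₀ t - z‖^2) • (γ₀ t - z)
          ∂(π.map fun σ => σ (Set.projIcc 0 1 zero_le_one t))) :
    (∀ t ∈ Set.Icc (0:ℝ) 1, ‖deriv (deriv γ₀) t‖ ≤ 4 * θ) ∧
    ∃ E : ℝ → EuclideanSpace ℝ (Fin n),
      (∀ t ∈ Set.Icc (0:ℝ) 1, γ₀ t = (γ₀ 0 + t • (γ₀ 1 - γ₀ 0)) + θ • E t) ∧
      ∀ t ∈ Set.Icc (0:ℝ) 1, ‖E t‖ ≤ 4 * Real.sqrt n := by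
  -- Part 1: bound on the second derivative
  have hM : ∀ t ∈ Set.Icc (0:ℝ) 1, ‖deriv (deriv γ₀) t‖ ≤ 4 * θ := by
    intro t ht
    rw [hEL t ht]
    set μt := π.map fun σ : C(Set.Icc (0:ℝ) 1, EuclideanSpace ℝ (Fin n)) =>
      σ (Set.projIcc 0 1 zero_le_one t) with hμt
    have hmeas : Measurable fun σ : C(Set.Icc (0:ℝ) 1, EuclideanSpace ℝ (Fin n)) =>
        σ (Set.projIcc 0 1 zero_le_one t) :=
      (continuous_eval_const _).measurable
    have : IsProbabilityMeasure μt := Measure.isProbabilityMeasure_map hmeas.aemeasurable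
    have hptw : ∀ z : EuclideanSpace ℝ (Fin n),
        ‖Real.exp (-‖γ₀ t - z‖ ^ 2) • (γ₀ t - z)‖ ≤ 1 := by
      intro z
      rw [norm_smul, Real.norm_eq_abs, abs_of_pos (Real.exp_pos _)]
      exact aux_exp_bound ‖γ₀ t - z‖ (norm_nonneg _)
    have hI : ‖∫ z, Real.exp (-‖γ₀ t - z‖ ^ 2) • (γ₀ t - z) ∂μt‖ ≤ 1 := by
      calc ‖∫ z, Real.exp (-‖γ₀ t - z‖ ^ 2) • (γ₀ t - z) ∂μt‖
          ≤ 1 * (μt Set.univ).toReal :=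
            norm_integral_le_of_norm_le_const (Filter.Eventually.of_forall hptw)
        _ = 1 := by simp
    rw [norm_smul]
    have : ‖(-(4 * θ))‖ = 4 * θ := by
      rw [Real.norm_eq_abs, abs_neg, abs_of_pos (by linarith)]
    rw [this]
    nlinarith [norm_nonneg (∫ z, Real.exp (-‖γ₀ t - z‖ ^ 2) • (γ₀ t - z) ∂μt)]
  refine ⟨hM, ?_⟩
  -- Part 2: comparison with the straight line
  set M := 4 * θ with hMdef
  have hdiff : Differentiable ℝ γ₀ := hγ.differentiable (by norm_num)
  have h1 : ContDiff ℝ 1 (deriv γ₀) :=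
    (contDiff_succ_iff_deriv.mp (show ContDiff ℝ (1 + 1) γ₀ by norm_num [hγ])).2.2
  have hdiff' : Differentiable ℝ (deriv γ₀) := h1.differentiable (by norm_num)
  have hcont' : Continuous (deriv γ₀) := hdiff'.continuous
  have hcont'' : Continuous (deriv (deriv γ₀)) := (contDiff_one_iff_deriv.mp h1).2
  -- FTC representations
  have ftc1 : ∀ t : ℝ, ∫ s in (0:ℝ)..t, deriv γ₀ s = γ₀ t - γ₀ 0 := fun t =>
    intervalIntegral.integral_deriv_eq_sub (fun x _ => hdiff x)
      (hcont'.intervalIntegrable _ _)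
  have ftc2 : ∀ s : ℝ, ∫ u in (0:ℝ)..s, deriv (deriv γ₀) u = deriv γ₀ s - deriv γ₀ 0 :=
    fun s => intervalIntegral.integral_deriv_eq_sub (fun x _ => hdiff' x)
      (hcont''.intervalIntegrable _ _)
  -- bound on H s := deriv γ₀ s - deriv γ₀ 0 for s ∈ [0,1]
  have hH : ∀ s ∈ Set.Icc (0:ℝ) 1, ‖deriv γ₀ s - deriv γ₀ 0‖ ≤ M * s := by
    intro s hs
    rw [← ftc2 s]
    have := intervalIntegral.norm_integral_le_of_norm_le_const
      (a := 0) (b := s) (C := M) (f := deriv (deriv γ₀)) ?_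
    · rwa [sub_zero, abs_of_nonneg hs.1] at this
    · intro x hx
      rw [Set.uIoc_of_le hs.1] at hx
      exact hM x ⟨le_of_lt hx.1, le_trans hx.2 hs.2⟩
  -- representation of γ₀
  have hrep : ∀ t : ℝ, γ₀ t - γ₀ 0 =
      t • deriv γ₀ 0 + ∫ s in (0:ℝ)..t, (deriv γ₀ s - deriv γ₀ 0) := by
    intro t
    rw [← ftc1 t]
    rw [intervalIntegral.integral_sub (hcont'.intervalIntegrable _ _)
      (intervalIntegrable_const)]
    rw [intervalIntegral.integral_const]
    abel_nf
  set g : ℝ → EuclideanSpace ℝ (Fin n) :=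
    fun t => γ₀ t - (γ₀ 0 + t • (γ₀ 1 - γ₀ 0)) with hg
  -- key bound on g
  have hgbound : ∀ t ∈ Set.Icc (0:ℝ) 1, ‖g t‖ ≤ M := by
    intro t ht
    have hA := hrep 1
    have hB := hrep t
    have hkey : g t = (∫ s in (0:ℝ)..t, (deriv γ₀ s - deriv γ₀ 0))
        - t • (∫ s in (0:ℝ)..1, (deriv γ₀ s - deriv γ₀ 0)) := by
      have h1' : γ₀ 1 - γ₀ 0 = deriv γ₀ 0 + ∫ s in (0:ℝ)..1, (deriv γ₀ s - deriv γ₀ 0) := by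
        rw [hA, one_smul]
      simp only [hg, h1']
      have := hB
      rw [show γ₀ t = γ₀ 0 + (t • deriv γ₀ 0 + ∫ s in (0:ℝ)..t, (deriv γ₀ s - deriv γ₀ 0))
        from by rw [← hB]; abel]
      rw [smul_add]
      abel
    rw [hkey]
    have hIb : ∀ b ∈ Set.Icc (0:ℝ) 1,
        ‖∫ s in (0:ℝ)..b, (deriv γ₀ s - deriv γ₀ 0)‖ ≤ M * b ^ 2 / 2 := by
      intro b hb
      have hle := intervalIntegral.norm_integral_le_abs_of_norm_le
        (μ := volume) (a := 0) (b := b) (f := fun s => deriv γ₀ s - deriv γ₀ 0)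
        (g := fun s => M * s)
        ((ae_restrict_iff' measurableSet_uIoc).mpr (Filter.Eventually.of_forall (fun s hs => by
          rw [Set.uIoc_of_le hb.1] at hs
          exact hH s ⟨le_of_lt hs.1, le_trans hs.2 hb.2⟩)))
        ((continuous_const.mul continuous_id).intervalIntegrable _ _)
      have hcalc : ∫ s in (0:ℝ)..b, M * s = M * b ^ 2 / 2 := by
        rw [intervalIntegral.integral_const_mul, integral_id]
        ring
      rw [hcalc, abs_of_nonneg (by positivity)] at hle
      exact hle
    calc ‖(∫ s in (0:ℝ)..t, (deriv γ₀ s - deriv γ₀ 0))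
          - t • (∫ s in (0:ℝ)..1, (deriv γ₀ s - deriv γ₀ 0))‖
        ≤ ‖∫ s in (0:ℝ)..t, (deriv γ₀ s - deriv γ₀ 0)‖
          + ‖t • (∫ s in (0:ℝ)..1, (deriv γ₀ s - deriv γ₀ 0))‖ := norm_sub_le _ _
      _ ≤ M * t ^ 2 / 2 + t * (M * 1 ^ 2 / 2) := by
          refine add_le_add (hIb t ht) ?_
          rw [norm_smul, Real.norm_eq_abs, abs_of_nonneg ht.1]
          exact mul_le_mul_of_nonneg_left (hIb 1 (by norm_num)) ht.1
      _ ≤ M := by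
          have h2 : t * t ≤ 1 := mul_le_one₀ ht.2 ht.1 ht.2
          nlinarith [hθ, ht.1, ht.2]
  -- construct E
  refine ⟨fun t => θ⁻¹ • g t, ?_, ?_⟩
  · intro t ht
    rw [smul_smul, mul_inv_cancel₀ (ne_of_gt hθ), one_smul, hg]
    module
  · intro t ht
    show ‖θ⁻¹ • g t‖ ≤ 4 * Real.sqrt n
    rcases Nat.eq_zero_or_pos n with hn | hn
    · subst hn
      have h0 : (θ⁻¹ • g t : EuclideanSpace ℝ (Fin 0)) = 0 := Subsingleton.elim _ _
      rw [h0, norm_zero]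
      positivity
    · have hsq : (1:ℝ) ≤ Real.sqrt n := by
        rw [show (1:ℝ) = Real.sqrt 1 from (Real.sqrt_one).symm]
        exact Real.sqrt_le_sqrt (by exact_mod_cast hn)
      have : ‖θ⁻¹ • g t‖ ≤ θ⁻¹ * M := by
        rw [norm_smul, Real.norm_eq_abs, abs_of_pos (inv_pos.mpr hθ)]
        exact mul_le_mul_of_nonneg_left (hgbound t ht) (le_of_lt (inv_pos.mpr hθ))
      have h4 : θ⁻¹ * M = 4 := by
        rw [hMdef]; field_simp
      nlinarith [this]
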